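/- For any Hermitian operators $O_1, O_2$ and density operator $\sigma$ on a finite-dimensional Hilbert space, $|\mathrm{tr}(\sigma[O_1,O_2])|^2 \le \mathcal{F}_\sigma(O_1)\, V_\sigma(O_2)$, where $V_\sigma(O) = \mathrm{tr}(\sigma O^2) - (\mathrm{tr}(\sigma O))^2$ and $\mathcal{F}_\sigma(O_1) = \mathrm{tr}(\sigma L^2)$ with $L$ the symmetric logarithmic derivative satisfying $-i[O_1,\sigma] = (L\sigma + \sigma L)/2$. -/

import Mathlib

open Matrix
open scoped Kronecker ComplexOrder

variable {n m : Type*} [Fintype n] [DecidableEq n] [Fintype m] [DecidableEq m]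

open Classical in
/-- square root of a matrix (zero if not PSD) -/
noncomputable def msqrt (A : Matrix n n ℂ) : Matrix n n ℂ :=
  if h : A.PosSemidef then
    h.1.eigenvectorUnitary.1 * diagonal ((↑) ∘ (√·) ∘ h.1.eigenvalues) *
      (star h.1.eigenvectorUnitary : Matrix n n ℂ) else 0

/-- trace norm -/
noncomputable def traceNorm (X : Matrix n m ℂ) : ℝ :=
  ((msqrt (Xᴴ * X)).trace).re

def IsDensity (ρ : Matrix n n ℂ) : Prop := ρ.PosSemidef ∧ ρ.trace = 1

noncomputable def variance (σ A : Matrix n n ℂ) : ℝ :=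
  (Matrix.trace (σ * (A * A))).re - ((Matrix.trace (σ * A)).re) ^ 2

/-- `L` is a symmetric logarithmic derivative for `(σ, W)`. -/
def IsSLD (σ W L : Matrix n n ℂ) : Prop :=
  L.IsHermitian ∧ L * σ + σ * L = ((-2 : ℂ) * Complex.I) • (W * σ - σ * W)

/-- SLD Fisher information value associated with a given SLD `L`. -/
noncomputable def fisherVal (σ L : Matrix n n ℂ) : ℝ :=
  (Matrix.trace (σ * (L * L))).re

noncomputable def fidelity (ρ σ : Matrix n n ℂ) : ℝ :=
  ((msqrt (msqrt ρ * σ * msqrt ρ)).trace).re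

noncomputable def purifiedDist (ρ σ : Matrix n n ℂ) : ℝ :=
  Real.sqrt (1 - fidelity ρ σ ^ 2)

/-- completely positive -/
def IsCompletelyPositive (Φ : Matrix n n ℂ →ₗ[ℂ] Matrix m m ℂ) : Prop :=
  ∀ (k : ℕ) (M : Matrix (Fin k × n) (Fin k × n) ℂ), M.PosSemidef →
    (Matrix.of fun (p q : Fin k × m) => (Φ (Matrix.of fun i j => M (p.1, i) (q.1, j))) p.2 q.2).PosSemidef

def IsCPTP (Φ : Matrix n n ℂ →ₗ[ℂ] Matrix m m ℂ) : Prop :=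
  IsCompletelyPositive Φ ∧ ∀ X, (Φ X).trace = X.trace

/-- partial trace over the second factor -/
noncomputable def ptraceR {k r : Type*} [Fintype k] [Fintype r]
    (M : Matrix (k × r) (k × r) ℂ) : Matrix k k ℂ :=
  Matrix.of fun i j => ∑ a : r, M (i, a) (j, a)


set_option linter.unusedSectionVars false in

lemma trace_eq_inner (X Y : Matrix n n ℂ) :
    Matrix.trace (Xᴴ * Y) =
      @inner ℂ (EuclideanSpace ℂ (n × n)) _ (WithLp.toLp 2 (fun p : n × n => X p.1 p.2)) (WithLp.toLp 2 (fun p : n × n => Y p.1 p.2)) := by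
  simp only [PiLp.inner_apply, PiLp.toLp_apply, RCLike.inner_apply, Matrix.trace, Matrix.mul_apply,
    Matrix.diag, Matrix.conjTranspose_apply, Fintype.sum_prod_type, starRingEnd_apply]
  rw [Finset.sum_comm]
  exact Finset.sum_congr rfl fun _ _ => Finset.sum_congr rfl fun _ _ => mul_comm _ _

lemma trace_cauchy_schwarz (X Y : Matrix n n ℂ) :
    ‖Matrix.trace (Xᴴ * Y)‖ ^ 2 ≤
      (Matrix.trace (Xᴴ * X)).re * (Matrix.trace (Yᴴ * Y)).re := by
  set u : EuclideanSpace ℂ (n × n) := WithLp.toLp 2 (fun p : n × n => X p.1 p.2) with hu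
  set v : EuclideanSpace ℂ (n × n) := WithLp.toLp 2 (fun p : n × n => Y p.1 p.2) with hv
  have h := @norm_inner_le_norm ℂ _ _ _ _ u v
  have h2 : ‖Matrix.trace (Xᴴ * Y)‖ ≤ ‖u‖ * ‖v‖ := by
    rw [trace_eq_inner]; exact h
  have hXX : (Matrix.trace (Xᴴ * X)).re = ‖u‖ ^ 2 := by
    rw [trace_eq_inner]; simpa using inner_self_eq_norm_sq (𝕜 := ℂ) u
  have hYY : (Matrix.trace (Yᴴ * Y)).re = ‖v‖ ^ 2 := by
    rw [trace_eq_inner]; simpa using inner_self_eq_norm_sq (𝕜 := ℂ) v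
  rw [hXX, hYY]
  calc ‖Matrix.trace (Xᴴ * Y)‖ ^ 2 ≤ (‖u‖ * ‖v‖) ^ 2 := by
        apply pow_le_pow_left₀ (norm_nonneg _) h2
    _ = ‖u‖ ^ 2 * ‖v‖ ^ 2 := by ring

lemma cs_sigma (σ : Matrix n n ℂ) (hσ : σ.PosSemidef) (A B : Matrix n n ℂ)
    (hA : A.IsHermitian) (hB : B.IsHermitian) :
    ‖Matrix.trace (σ * (A * B))‖ ^ 2 ≤
      (Matrix.trace (σ * (A * A))).re * (Matrix.trace (σ * (B * B))).re := by
  obtain ⟨s, hss, hsh⟩ : ∃ s : Matrix n n ℂ, s * s = σ ∧ sᴴ = s := by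
    open scoped MatrixOrder in
    exact ⟨CFC.sqrt σ, CFC.sqrt_mul_sqrt_self σ hσ.nonneg, (CFC.sqrt_nonneg σ).posSemidef.1⟩
  have key : ∀ C D : Matrix n n ℂ, C.IsHermitian → D.IsHermitian →
      Matrix.trace (σ * (C * D)) = Matrix.trace ((C * s)ᴴ * (D * s)) := by
    intro C D hC hD
    rw [Matrix.conjTranspose_mul, hsh, hC.eq]
    rw [show s * C * (D * s) = s * (C * D * s) by noncomm_ring,
        Matrix.trace_mul_comm s (C * D * s), Matrix.mul_assoc (C * D) s s, hss,
        Matrix.trace_mul_comm σ (C * D)]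
  rw [key A B hA hB, key A A hA hA, key B B hB hB]
  exact trace_cauchy_schwarz _ _

/-- Improved Robertson uncertainty relation with SLD Fisher information. -/
theorem robertson_fisher (σ O1 O2 L : Matrix n n ℂ) (hσ : IsDensity σ)
    (h1 : O1.IsHermitian) (h2 : O2.IsHermitian) (hL : IsSLD σ O1 L) :
    ‖Matrix.trace (σ * (O1 * O2 - O2 * O1))‖ ^ 2 ≤
      fisherVal σ L * variance σ O2 := by
  unfold fisherVal variance
  set μ : ℝ := (Matrix.trace (σ * O2)).re with hμ
  set B : Matrix n n ℂ := O2 - (μ : ℂ) • (1 : Matrix n n ℂ) with hB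
  have hBh : B.IsHermitian := by
    unfold Matrix.IsHermitian
    simp [hB, Matrix.conjTranspose_smul, h2.eq, Complex.conj_ofReal]
  have trL : Matrix.trace (σ * L) = 0 := by
    have h := congrArg Matrix.trace hL.2
    simp only [Matrix.trace_add, Matrix.trace_smul, Matrix.trace_sub,
      Matrix.trace_mul_comm L σ, Matrix.trace_mul_comm O1 σ] at h
    simp only [sub_self, smul_zero] at h
    linear_combination h / 2
  have hstep := congrArg (fun M => Matrix.trace (M * O2)) hL.2
  simp only [Matrix.add_mul, Matrix.smul_mul, Matrix.sub_mul, Matrix.trace_add,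
    Matrix.trace_smul, Matrix.trace_sub, Matrix.mul_assoc] at hstep
  rw [Matrix.trace_mul_comm L (σ * O2), Matrix.trace_mul_comm O1 (σ * O2)] at hstep
  simp only [Matrix.mul_assoc, smul_eq_mul] at hstep
  set c : ℂ := Matrix.trace (σ * (L * B)) with hc
  have hLB : Matrix.trace (σ * (L * B)) = Matrix.trace (σ * (L * O2)) := by
    rw [hB, Matrix.mul_sub, Matrix.mul_smul, Matrix.mul_one, Matrix.mul_sub,
      Matrix.mul_smul, Matrix.trace_sub, Matrix.trace_smul, trL, smul_zero, sub_zero]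
  have hBL : Matrix.trace (σ * (B * L)) = Matrix.trace (σ * (O2 * L)) := by
    rw [hB, Matrix.sub_mul, Matrix.smul_mul, Matrix.one_mul, Matrix.mul_sub,
      Matrix.mul_smul, Matrix.trace_sub, Matrix.trace_smul, trL, smul_zero, sub_zero]
  have hconj : Matrix.trace (σ * (B * L)) = (starRingEnd ℂ) c := by
    have h' : (σ * (L * B))ᴴ = B * L * σ := by
      rw [Matrix.conjTranspose_mul, Matrix.conjTranspose_mul, hL.1.eq, hBh.eq, hσ.1.1.eq]
    have h'' := Matrix.trace_conjTranspose (σ * (L * B))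
    rw [h', Matrix.trace_mul_comm] at h''
    rw [hc, starRingEnd_apply]; exact h''
  have hsum : Matrix.trace (σ * (O2 * L)) + Matrix.trace (σ * (L * O2))
      = 2 * (c.re : ℂ) := by
    rw [← hBL, ← hLB, hconj, ← hc, add_comm, Complex.add_conj]
    push_cast; ring
  rw [hsum] at hstep
  have hI : Complex.I ^ 2 = -1 := Complex.I_sq
  have hcomm : Matrix.trace (σ * (O1 * O2 - O2 * O1)) = -Complex.I * (c.re : ℂ) := by
    rw [Matrix.mul_sub, Matrix.trace_sub]
    linear_combination (Complex.I / 2) * hstep +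
      (Matrix.trace (σ * (O1 * O2)) - Matrix.trace (σ * (O2 * O1))) * hI
  have hvar : (Matrix.trace (σ * (B * B))).re
      = (Matrix.trace (σ * (O2 * O2))).re - μ ^ 2 := by
    have hexp : σ * (B * B) = σ * (O2 * O2) - (μ : ℂ) • (σ * O2) - (μ : ℂ) • (σ * O2)
        + ((μ : ℂ) * μ) • σ := by
      rw [hB]
      simp only [Matrix.mul_sub, Matrix.sub_mul, Matrix.smul_mul, Matrix.mul_smul,
        Matrix.mul_one, Matrix.one_mul, smul_smul]
      module
    rw [hexp]
    simp only [Matrix.trace_add, Matrix.trace_sub, Matrix.trace_smul, hσ.2, smul_eq_mul,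
      mul_one, Complex.sub_re, Complex.add_re, Complex.mul_re, Complex.ofReal_re,
      Complex.ofReal_im]
    rw [← hμ]; ring
  have hcs := cs_sigma σ hσ.1 L B hL.1 hBh
  rw [hcomm]
  have habs : ‖-Complex.I * (c.re : ℂ)‖ ^ 2 = c.re ^ 2 := by
    simp [norm_mul, Complex.norm_real, mul_pow, sq_abs]
  rw [habs]
  calc c.re ^ 2 ≤ ‖c‖ ^ 2 := by
        rw [Complex.sq_norm, Complex.normSq_apply]; nlinarith [sq_nonneg c.im]
    _ ≤ _ := by rw [hvar] at hcs; simpa [← hc] using hcs
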